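/- Let ν be the measure on ℝⁿ × (0,∞) with density (x,z) ↦ e^{−1/z} z^{−(n+2)} with respect to Lebesgue measure. Then for every measurable φ : ℝⁿ → [0,∞], ν(F(epi φ)) = ∫_{ℝⁿ} e^{−φ(x)} dx, where F(x,z) = (x/z, 1/z) and epi φ = {(x,z) : φ(x) < z}. -/

import Mathlib

open MeasureTheory Set Pointwise

def epi {n : ℕ} (φ : (Fin n → ℝ) → ENNReal) : Set ((Fin n → ℝ) × ℝ) :=
  {p | 0 < p.2 ∧ φ p.1 < ENNReal.ofReal p.2}

noncomputable def Fmap {n : ℕ} (p : (Fin n → ℝ) × ℝ) : (Fin n → ℝ) × ℝ :=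
  (p.2⁻¹ • p.1, p.2⁻¹)

/-- `e^{-a}` for `a ∈ [0,∞]`, with `e^{-∞} = 0`. -/
noncomputable def negExp (a : ENNReal) : ENNReal :=
  if a = ⊤ then 0 else ENNReal.ofReal (Real.exp (-a.toReal))

lemma lintegral_exp_neg_Ioi' (c : ℝ) :
    ∫⁻ z in Ioi c, ENNReal.ofReal (Real.exp (-z)) = ENNReal.ofReal (Real.exp (-c)) := by
  rw [← ofReal_integral_eq_lintegral_ofReal]
  · rw [integral_exp_neg_Ioi]
  · exact (by simpa using exp_neg_integrableOn_Ioi c one_pos :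
      IntegrableOn (fun x => Real.exp (-x)) (Ioi c))
  · filter_upwards with x using (Real.exp_pos _).le

lemma Fmap_image_epi {n : ℕ} (φ : (Fin n → ℝ) → ENNReal) :
    Fmap '' epi φ =
      {p : (Fin n → ℝ) × ℝ | 0 < p.2 ∧ φ (p.2⁻¹ • p.1) < ENNReal.ofReal p.2⁻¹} := by
  ext ⟨y, w⟩
  constructor
  · rintro ⟨⟨x, z⟩, ⟨hz, hxz⟩, h⟩
    rw [← h]
    refine ⟨inv_pos.2 hz, ?_⟩
    simpa [Fmap, smul_smul, mul_inv_cancel₀ (ne_of_gt hz)] using hxz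
  · rintro ⟨hw, hyw⟩
    refine ⟨(w⁻¹ • y, w⁻¹), ⟨inv_pos.2 hw, by simpa using hyw⟩, ?_⟩
    simp [Fmap, smul_smul, inv_inv, mul_inv_cancel₀ (ne_of_gt hw)]

theorem measure_nu_of_Fmap_epi (n : ℕ)
    (ν : Measure ((Fin n → ℝ) × ℝ))
    (hν : ν = volume.withDensity (fun p =>
      if 0 < p.2 then ENNReal.ofReal (Real.exp (-p.2⁻¹) * p.2 ^ (-(n + 2 : ℝ))) else 0))
    (φ : (Fin n → ℝ) → ENNReal) (hφ : Measurable φ) :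
    ν (Fmap '' epi φ) = ∫⁻ x, negExp (φ x) := by
  subst hν
  set f : (Fin n → ℝ) × ℝ → ENNReal := fun p =>
      if 0 < p.2 then ENNReal.ofReal (Real.exp (-p.2⁻¹) * p.2 ^ (-(n + 2 : ℝ))) else 0 with hfdef
  set g : (Fin n → ℝ) × ℝ → ENNReal := fun p =>
      ENNReal.ofReal (Real.exp (-p.2⁻¹) * (p.2 ^ (n + 2 : ℕ))⁻¹) with hgdef
  have hgmeas : Measurable g := ((Real.measurable_exp.comp measurable_snd.inv.neg).mul
      ((measurable_snd.pow_const (n + 2)).inv)).ennreal_ofReal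
  set A : Set ((Fin n → ℝ) × ℝ) :=
      {p | 0 < p.2 ∧ φ (p.2⁻¹ • p.1) < ENNReal.ofReal p.2⁻¹} with hAdef
  have hA : MeasurableSet A := by
    have h1 : Measurable fun p : (Fin n → ℝ) × ℝ => φ (p.2⁻¹ • p.1) :=
      hφ.comp (measurable_snd.inv.smul measurable_fst)
    have h2 : Measurable fun p : (Fin n → ℝ) × ℝ => ENNReal.ofReal p.2⁻¹ :=
      measurable_snd.inv.ennreal_ofReal
    have h3 : MeasurableSet {p : (Fin n → ℝ) × ℝ | φ (p.2⁻¹ • p.1) < ENNReal.ofReal p.2⁻¹} :=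
      measurableSet_lt h1 h2
    have h4 : MeasurableSet {p : (Fin n → ℝ) × ℝ | 0 < p.2} :=
      measurableSet_lt measurable_const measurable_snd
    exact h4.inter h3
  have hfg : ∀ p ∈ A, f p = g p := by
    rintro ⟨y, w⟩ ⟨hw, -⟩
    simp only [hfdef, hgdef, if_pos hw]
    congr 2
    rw [Real.rpow_neg hw.le, ← Real.rpow_natCast w (n + 2)]
    norm_num
  rw [Fmap_image_epi, ← hAdef, withDensity_apply _ hA,
    setLIntegral_congr_fun hA hfg, ← lintegral_indicator hA,
    Measure.volume_eq_prod, lintegral_prod_symm _ ((hgmeas.indicator hA).aemeasurable)]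
  -- inner integral over y, for each w
  have key1 : ∀ w : ℝ, (∫⁻ y, A.indicator g (y, w)) =
      (Ioi (0:ℝ)).indicator (fun w => ENNReal.ofReal |(-(w ^ 2)⁻¹)| *
        (ENNReal.ofReal (Real.exp (-w⁻¹)) * volume {u | φ u < ENNReal.ofReal w⁻¹})) w := by
    intro w
    by_cases hw : 0 < w
    · rw [Set.indicator_of_mem (show w ∈ Ioi (0:ℝ) from hw)]
      set U : Set (Fin n → ℝ) := {u | φ u < ENNReal.ofReal w⁻¹} with hU
      have hUmeas : MeasurableSet U := measurableSet_lt hφ measurable_const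
      set c : ENNReal := ENNReal.ofReal (Real.exp (-w⁻¹) * (w ^ (n + 2 : ℕ))⁻¹) with hc
      have h1 : ∀ y, A.indicator g (y, w) = (w • U).indicator (fun _ => c) y := by
        intro y
        by_cases hy : φ (w⁻¹ • y) < ENNReal.ofReal w⁻¹
        · rw [indicator_of_mem (show ((y, w) : (Fin n → ℝ) × ℝ) ∈ A from ⟨hw, hy⟩),
            indicator_of_mem (by
              rw [mem_smul_set_iff_inv_smul_mem₀ (ne_of_gt hw)]; exact hy)]
        · rw [indicator_of_notMem (fun h => hy h.2),
            indicator_of_notMem (by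
              rw [mem_smul_set_iff_inv_smul_mem₀ (ne_of_gt hw)]; exact hy)]
      simp only [h1]
      rw [lintegral_indicator_const (hUmeas.const_smul₀ w),
        Measure.addHaar_smul volume w U, Module.finrank_fin_fun]
      have hwne : w ≠ 0 := ne_of_gt hw
      have hsc : c * ENNReal.ofReal |w ^ n| =
          ENNReal.ofReal |(-(w ^ 2)⁻¹)| * ENNReal.ofReal (Real.exp (-w⁻¹)) := by
        rw [hc, ← ENNReal.ofReal_mul (by positivity), ← ENNReal.ofReal_mul (abs_nonneg _)]
        congr 1
        rw [abs_of_pos (pow_pos hw n), abs_neg, abs_inv, abs_of_pos (pow_pos hw 2)]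
        field_simp
        ring
      rw [← mul_assoc, hsc, mul_assoc]
    · rw [Set.indicator_of_notMem (show w ∉ Ioi (0:ℝ) from hw)]
      have h0 : ∀ y, A.indicator g (y, w) = 0 := fun y =>
        indicator_of_notMem (fun h => hw h.1) g
      simp [h0]
  simp only [key1]
  rw [lintegral_indicator measurableSet_Ioi]
  -- 1-D change of variables z = w⁻¹
  have himg : (fun w : ℝ => w⁻¹) '' Ioi 0 = Ioi 0 := by
    ext z
    constructor
    · rintro ⟨w, hw, rfl⟩; exact inv_pos.2 (show (0:ℝ) < w from hw)
    · intro hz; exact ⟨z⁻¹, show (0:ℝ) < z⁻¹ from inv_pos.2 hz, inv_inv z⟩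
  have hderiv : ∀ w ∈ Ioi (0:ℝ), HasFDerivWithinAt (fun w : ℝ => w⁻¹)
      ((1 : ℝ →L[ℝ] ℝ).smulRight (-(w ^ 2)⁻¹)) (Ioi 0) w := fun w hw =>
    ((hasDerivAt_inv (ne_of_gt hw)).hasDerivWithinAt).hasFDerivWithinAt
  have hinj : InjOn (fun w : ℝ => w⁻¹) (Ioi 0) := fun a _ b _ h => inv_injective h
  have sub := lintegral_image_eq_lintegral_abs_det_fderiv_mul volume measurableSet_Ioi
    hderiv hinj (fun z => ENNReal.ofReal (Real.exp (-z)) * volume {u | φ u < ENNReal.ofReal z})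
  rw [himg] at sub
  simp only [ContinuousLinearMap.smulRight_one_eq_toSpanSingleton, ContinuousLinearMap.det_toSpanSingleton] at sub
  rw [← sub]
  -- Fubini back
  have kmeas : Measurable fun q : ℝ × (Fin n → ℝ) =>
      if φ q.2 < ENNReal.ofReal q.1 then ENNReal.ofReal (Real.exp (-q.1)) else 0 := by
    refine Measurable.ite (measurableSet_lt (hφ.comp measurable_snd)
      measurable_fst.ennreal_ofReal) ?_ measurable_const
    exact (Real.measurable_exp.comp measurable_fst.neg).ennreal_ofReal
  have key2 : ∀ z : ℝ, ENNReal.ofReal (Real.exp (-z)) * volume {u | φ u < ENNReal.ofReal z} =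
      ∫⁻ u, if φ u < ENNReal.ofReal z then ENNReal.ofReal (Real.exp (-z)) else 0 := by
    intro z
    rw [← lintegral_indicator_const (measurableSet_lt hφ measurable_const)
      (ENNReal.ofReal (Real.exp (-z)))]
    congr 1
    ext u
    rw [Set.indicator_apply]
    simp only [Set.mem_setOf_eq]
  simp only [key2]
  rw [lintegral_lintegral_swap (kmeas.aemeasurable)]
  congr 1
  ext u
  by_cases hu : φ u = ⊤
  · simp [negExp, hu]
  · have htiff : ∀ z : ℝ, (φ u < ENNReal.ofReal z) ↔ ((φ u).toReal < z) := fun z =>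
      ENNReal.lt_ofReal_iff_toReal_lt hu
    have ht0 : (0:ℝ) ≤ (φ u).toReal := ENNReal.toReal_nonneg
    have : ∀ z : ℝ, (if φ u < ENNReal.ofReal z then ENNReal.ofReal (Real.exp (-z)) else 0) =
        (Ioi ((φ u).toReal)).indicator (fun z => ENNReal.ofReal (Real.exp (-z))) z := by
      intro z
      rw [Set.indicator_apply]
      simp only [Set.mem_Ioi]
      by_cases hz : (φ u).toReal < z
      · rw [if_pos ((htiff z).2 hz), if_pos hz]
      · rw [if_neg (fun h => hz ((htiff z).1 h)), if_neg hz]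
    simp only [this]
    rw [lintegral_indicator measurableSet_Ioi, Measure.restrict_restrict measurableSet_Ioi,
      inter_eq_left.2 (Ioi_subset_Ioi ht0), lintegral_exp_neg_Ioi']
    simp [negExp, hu]
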